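/- For every angle ψ ∈ ℝ, the 2×2 rotation matrix U_ψ can be written as a product of five symmetric positive definite real 2×2 matrices. -/

import Mathlib

open Matrix Real

/-- The 2×2 rotation matrix by angle `ψ`. -/
noncomputable def rotMat (ψ : ℝ) : Matrix (Fin 2) (Fin 2) ℝ :=
  !![Real.cos ψ, Real.sin ψ; -Real.sin ψ, Real.cos ψ]

/-- A symmetric real 2×2 matrix with positive entries criteria is positive definite. -/
lemma pd2 {a b c : ℝ} (ha : 0 < a) (hd : 0 < a * c - b * b) :
    (!![a, b; b, c] : Matrix (Fin 2) (Fin 2) ℝ).PosDef := by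
  refine Matrix.PosDef.of_dotProduct_mulVec_pos ?_ ?_
  · ext i j
    fin_cases i <;> fin_cases j <;> simp [Matrix.conjTranspose_apply]
  · intro x hx
    have hx' : x 0 ≠ 0 ∨ x 1 ≠ 0 := by
      by_contra h
      push_neg at h
      apply hx
      ext i
      fin_cases i <;> simp [h.1, h.2]
    have key : (star x) ⬝ᵥ ((!![a, b; b, c] : Matrix (Fin 2) (Fin 2) ℝ) *ᵥ x) =
        a * x 0 ^ 2 + 2 * b * (x 0 * x 1) + c * x 1 ^ 2 := by
      simp [dotProduct, Matrix.mulVec, Fin.sum_univ_two]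
      ring
    rw [key]
    rcases hx' with h0 | h1
    · rcases eq_or_ne (x 1) 0 with h1 | h1
      · have h2 : 0 < a * x 0 ^ 2 := by positivity
        simp only [h1]
        nlinarith
      · nlinarith [sq_nonneg (a * x 0 + b * x 1), mul_pos hd (pow_pos (abs_pos.mpr h1) 2),
          sq_abs (x 1)]
    · nlinarith [sq_nonneg (a * x 0 + b * x 1), mul_pos hd (pow_pos (abs_pos.mpr h1) 2),
        sq_abs (x 1)]

set_option maxHeartbeats 1200000 in
lemma key_lemma (c s : ℝ) (hc : 0 < c) (h1 : c ^ 2 + s ^ 2 = 1) :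
    ∃ M₁ M₂ M₃ M₄ M₅ : Matrix (Fin 2) (Fin 2) ℝ,
      M₁.PosDef ∧ M₂.PosDef ∧ M₃.PosDef ∧ M₄.PosDef ∧ M₅.PosDef ∧
      (!![c ^ 2 - s ^ 2, 2 * c * s; -(2 * c * s), c ^ 2 - s ^ 2] :
        Matrix (Fin 2) (Fin 2) ℝ) = M₅ * M₄ * M₃ * M₂ * M₁ := by
  have hc1 : c ^ 2 ≤ 1 := by nlinarith [sq_nonneg s]
  have hs1 : s ^ 2 ≤ 1 := by nlinarith [sq_nonneg c]
  have hcne : c ≠ 0 := ne_of_gt hc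
  have h16 : (0:ℝ) < 16 - c ^ 2 := by nlinarith
  have h32 : (0:ℝ) < 32 - 16 * c ^ 2 - c ^ 4 := by nlinarith
  have hepos : (0:ℝ) < ((16 - c ^ 2) ^ 2 - 64 * s ^ 2) := by nlinarith
  have hene : ((16 - c ^ 2) ^ 2 - 64 * s ^ 2) ≠ 0 := ne_of_gt hepos
  refine ⟨!![(16 * c ^ 4 * ((16 - c ^ 2) ^ 2 - 64 * s ^ 2) ^ 2)⁻¹, 0; 0, (16 * c ^ 4 * ((16 - c ^ 2) ^ 2 - 64 * s ^ 2) ^ 2)⁻¹],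
    !![16 * (32 - 16 * c ^ 2 - c ^ 4), -(16 * c * s * (16 + c ^ 2));
       -(16 * c * s * (16 + c ^ 2)), 16 * c ^ 2 * (14 + c ^ 2)],
    !![c ^ 2 * (16 - c ^ 2) / 16, 2 * c * s; 2 * c * s, 16 - c ^ 2],
    !![256 * (14 + c ^ 2), 16 * c * s * (16 + c ^ 2);
       16 * c * s * (16 + c ^ 2), c ^ 2 * (32 - 16 * c ^ 2 - c ^ 4)],
    !![c ^ 2 * (16 - c ^ 2) / 16, -(2 * c * s); -(2 * c * s), 16 - c ^ 2],
    ?_, ?_, ?_, ?_, ?_, ?_⟩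
  · refine pd2 (by positivity) ?_
    have h0 : (0:ℝ) < (16 * c ^ 4 * ((16 - c ^ 2) ^ 2 - 64 * s ^ 2) ^ 2)⁻¹ := by positivity
    nlinarith
  · refine pd2 (by positivity) ?_
    have hdet : 16 * (32 - 16 * c ^ 2 - c ^ 4) * (16 * c ^ 2 * (14 + c ^ 2)) -
        -(16 * c * s * (16 + c ^ 2)) * -(16 * c * s * (16 + c ^ 2)) =
        256 * c ^ 2 * (192 + 32 * c ^ 2 + c ^ 4) := by
      linear_combination (-65536 * c ^ 2 - 8192 * c ^ 4 - 256 * c ^ 6) * h1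
    rw [hdet]; positivity
  · refine pd2 (by positivity) ?_
    have hdet : c ^ 2 * (16 - c ^ 2) / 16 * (16 - c ^ 2) - 2 * c * s * (2 * c * s) =
        c ^ 2 * (192 + 32 * c ^ 2 + c ^ 4) / 16 := by
      linear_combination (-4 * c ^ 2) * h1
    rw [hdet]; positivity
  · refine pd2 (by positivity) ?_
    have hdet : 256 * (14 + c ^ 2) * (c ^ 2 * (32 - 16 * c ^ 2 - c ^ 4)) -
        16 * c * s * (16 + c ^ 2) * (16 * c * s * (16 + c ^ 2)) =
        256 * c ^ 2 * (192 + 32 * c ^ 2 + c ^ 4) := by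
      linear_combination (-65536 * c ^ 2 - 8192 * c ^ 4 - 256 * c ^ 6) * h1
    rw [hdet]; positivity
  · refine pd2 (by positivity) ?_
    have hdet : c ^ 2 * (16 - c ^ 2) / 16 * (16 - c ^ 2) - -(2 * c * s) * -(2 * c * s) =
        c ^ 2 * (192 + 32 * c ^ 2 + c ^ 4) / 16 := by
      linear_combination (-4 * c ^ 2) * h1
    rw [hdet]; positivity
  · have h54 : (!![c ^ 2 * (16 - c ^ 2) / 16, -(2 * c * s); -(2 * c * s), 16 - c ^ 2] :
        Matrix (Fin 2) (Fin 2) ℝ) *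
        !![256 * (14 + c ^ 2), 16 * c * s * (16 + c ^ 2);
           16 * c * s * (16 + c ^ 2), c ^ 2 * (32 - 16 * c ^ 2 - c ^ 4)] =
        !![16 * c ^ 2 * (192 + 32 * c ^ 2 + c ^ 4), c ^ 3 * s * (192 + 32 * c ^ 2 + c ^ 4); -(16 * c * s * (192 + 32 * c ^ 2 + c ^ 4)), c ^ 4 * (192 + 32 * c ^ 2 + c ^ 4)] := by
      ext i j
      fin_cases i <;> fin_cases j <;> simp [Matrix.mul_apply, Fin.sum_univ_two]
      all_goals first
        | ring1
        | linear_combination (-512 * c ^ 2 - 32 * c ^ 4) * h1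
        | linear_combination (512 * c ^ 2 + 32 * c ^ 4) * h1
    have h32' : (!![c ^ 2 * (16 - c ^ 2) / 16, 2 * c * s; 2 * c * s, 16 - c ^ 2] :
        Matrix (Fin 2) (Fin 2) ℝ) *
        !![16 * (32 - 16 * c ^ 2 - c ^ 4), -(16 * c * s * (16 + c ^ 2));
           -(16 * c * s * (16 + c ^ 2)), 16 * c ^ 2 * (14 + c ^ 2)] =
        !![c ^ 4 * (192 + 32 * c ^ 2 + c ^ 4), c ^ 3 * s * (192 + 32 * c ^ 2 + c ^ 4); -(16 * c * s * (192 + 32 * c ^ 2 + c ^ 4)), 16 * c ^ 2 * (192 + 32 * c ^ 2 + c ^ 4)] := by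
      ext i j
      fin_cases i <;> fin_cases j <;> simp [Matrix.mul_apply, Fin.sum_univ_two]
      all_goals first
        | ring1
        | linear_combination (-512 * c ^ 2 - 32 * c ^ 4) * h1
        | linear_combination (512 * c ^ 2 + 32 * c ^ 4) * h1
    have hC : (!![16 * c ^ 2 * (192 + 32 * c ^ 2 + c ^ 4), c ^ 3 * s * (192 + 32 * c ^ 2 + c ^ 4); -(16 * c * s * (192 + 32 * c ^ 2 + c ^ 4)), c ^ 4 * (192 + 32 * c ^ 2 + c ^ 4)] :
        Matrix (Fin 2) (Fin 2) ℝ) *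
        !![c ^ 4 * (192 + 32 * c ^ 2 + c ^ 4), c ^ 3 * s * (192 + 32 * c ^ 2 + c ^ 4); -(16 * c * s * (192 + 32 * c ^ 2 + c ^ 4)), 16 * c ^ 2 * (192 + 32 * c ^ 2 + c ^ 4)] =
        !![16 * c ^ 4 * ((16 - c ^ 2) ^ 2 - 64 * s ^ 2) ^ 2 * (c ^ 2 - s ^ 2), 16 * c ^ 4 * ((16 - c ^ 2) ^ 2 - 64 * s ^ 2) ^ 2 * (2 * c * s);
           -(16 * c ^ 4 * ((16 - c ^ 2) ^ 2 - 64 * s ^ 2) ^ 2 * (2 * c * s)), 16 * c ^ 4 * ((16 - c ^ 2) ^ 2 - 64 * s ^ 2) ^ 2 * (c ^ 2 - s ^ 2)] := by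
      ext i j
      fin_cases i <;> fin_cases j <;> simp [Matrix.mul_apply, Fin.sum_univ_two]
      all_goals first
        | ring1
        | linear_combination (-458752 * c ^ 4 * s ^ 2 + 65536 * c ^ 4 * s ^ 4 + 458752 * c ^ 6 - 65536 * c ^ 6 * s ^ 2 - 2048 * c ^ 8 * s ^ 2 + 2048 * c ^ 10) * h1
        | linear_combination (917504 * c ^ 5 * s - 131072 * c ^ 5 * s ^ 3 + 4096 * c ^ 9 * s) * h1
        | linear_combination (-(917504 * c ^ 5 * s - 131072 * c ^ 5 * s ^ 3 + 4096 * c ^ 9 * s)) * h1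
        | linear_combination (-(-458752 * c ^ 4 * s ^ 2 + 65536 * c ^ 4 * s ^ 4 + 458752 * c ^ 6 - 65536 * c ^ 6 * s ^ 2 - 2048 * c ^ 8 * s ^ 2 + 2048 * c ^ 10)) * h1
    have hk : 16 * c ^ 4 * ((16 - c ^ 2) ^ 2 - 64 * s ^ 2) ^ 2 * (16 * c ^ 4 * ((16 - c ^ 2) ^ 2 - 64 * s ^ 2) ^ 2)⁻¹ = 1 := by
      field_simp
    have hfin : (!![16 * c ^ 4 * ((16 - c ^ 2) ^ 2 - 64 * s ^ 2) ^ 2 * (c ^ 2 - s ^ 2), 16 * c ^ 4 * ((16 - c ^ 2) ^ 2 - 64 * s ^ 2) ^ 2 * (2 * c * s);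
           -(16 * c ^ 4 * ((16 - c ^ 2) ^ 2 - 64 * s ^ 2) ^ 2 * (2 * c * s)), 16 * c ^ 4 * ((16 - c ^ 2) ^ 2 - 64 * s ^ 2) ^ 2 * (c ^ 2 - s ^ 2)] :
        Matrix (Fin 2) (Fin 2) ℝ) *
        !![(16 * c ^ 4 * ((16 - c ^ 2) ^ 2 - 64 * s ^ 2) ^ 2)⁻¹, 0; 0, (16 * c ^ 4 * ((16 - c ^ 2) ^ 2 - 64 * s ^ 2) ^ 2)⁻¹] =
        !![c ^ 2 - s ^ 2, 2 * c * s; -(2 * c * s), c ^ 2 - s ^ 2] := by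
      generalize hgen : (16 * c ^ 4 * ((16 - c ^ 2) ^ 2 - 64 * s ^ 2) ^ 2)⁻¹ = k at hk ⊢
      ext i j
      fin_cases i <;> fin_cases j <;> simp [Matrix.mul_apply, Fin.sum_univ_two]
      all_goals first
        | ring1
        | linear_combination (c ^ 2 - s ^ 2) * hk
        | linear_combination (2 * c * s) * hk
        | linear_combination (-(2 * c * s)) * hk
        | linear_combination (-(c ^ 2 - s ^ 2)) * hk
    have hC' : (!![16 * c ^ 2 * (192 + 32 * c ^ 2 + c ^ 4), c ^ 3 * s * (192 + 32 * c ^ 2 + c ^ 4); -(16 * c * s * (192 + 32 * c ^ 2 + c ^ 4)), c ^ 4 * (192 + 32 * c ^ 2 + c ^ 4)] : Matrix (Fin 2) (Fin 2) ℝ) *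
        !![c ^ 2 * (16 - c ^ 2) / 16, 2 * c * s; 2 * c * s, 16 - c ^ 2] *
        !![16 * (32 - 16 * c ^ 2 - c ^ 4), -(16 * c * s * (16 + c ^ 2));
           -(16 * c * s * (16 + c ^ 2)), 16 * c ^ 2 * (14 + c ^ 2)] =
        !![16 * c ^ 4 * ((16 - c ^ 2) ^ 2 - 64 * s ^ 2) ^ 2 * (c ^ 2 - s ^ 2), 16 * c ^ 4 * ((16 - c ^ 2) ^ 2 - 64 * s ^ 2) ^ 2 * (2 * c * s);
           -(16 * c ^ 4 * ((16 - c ^ 2) ^ 2 - 64 * s ^ 2) ^ 2 * (2 * c * s)), 16 * c ^ 4 * ((16 - c ^ 2) ^ 2 - 64 * s ^ 2) ^ 2 * (c ^ 2 - s ^ 2)] := by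
      rw [mul_assoc, h32']
      exact hC
    rw [h54, hC', hfin]

theorem rotation_eq_product_of_five_posDef (ψ : ℝ) :
    ∃ M₁ M₂ M₃ M₄ M₅ : Matrix (Fin 2) (Fin 2) ℝ,
      M₁.PosDef ∧ M₂.PosDef ∧ M₃.PosDef ∧ M₄.PosDef ∧ M₅.PosDef ∧
      rotMat ψ = M₅ * M₄ * M₃ * M₂ * M₁ := by
  by_cases hcos : Real.cos ψ = -1
  · have hsin : Real.sin ψ = 0 := by
      have h := Real.sin_sq_add_cos_sq ψ
      rw [hcos] at h
      have h2 : Real.sin ψ ^ 2 = 0 := by nlinarith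
      exact pow_eq_zero_iff (by norm_num) |>.mp h2
    refine ⟨!![32823/6208, 10395/1552; 10395/1552, 3339/388],
      !![2, -88/63; -88/63, 1], !![1, 2; 2, 5], !![8, 0; 0, 1], !![4, -4; -4, 5],
      pd2 (by norm_num) (by norm_num), pd2 (by norm_num) (by norm_num),
      pd2 (by norm_num) (by norm_num), pd2 (by norm_num) (by norm_num),
      pd2 (by norm_num) (by norm_num), ?_⟩
    rw [rotMat, hcos, hsin]
    ext i j
    fin_cases i <;> fin_cases j <;>
      simp [Matrix.mul_apply, Fin.sum_univ_two] <;> norm_num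
  · have hiden : rotMat ψ = !![Real.cos (ψ/2) ^ 2 - Real.sin (ψ/2) ^ 2,
        2 * Real.cos (ψ/2) * Real.sin (ψ/2);
        -(2 * Real.cos (ψ/2) * Real.sin (ψ/2)),
        Real.cos (ψ/2) ^ 2 - Real.sin (ψ/2) ^ 2] := by
      have hc2 : Real.cos ψ = Real.cos (ψ/2) ^ 2 - Real.sin (ψ/2) ^ 2 := by
        rw [show ψ = 2 * (ψ/2) by ring, Real.cos_two_mul']
        ring_nf
      have hs2 : Real.sin ψ = 2 * Real.cos (ψ/2) * Real.sin (ψ/2) := by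
        rw [show ψ = 2 * (ψ/2) by ring, Real.sin_two_mul]
        ring_nf
      rw [rotMat, hc2, hs2]
    have hc0 : Real.cos (ψ/2) ≠ 0 := by
      intro h
      apply hcos
      rw [show ψ = 2 * (ψ/2) by ring, Real.cos_two_mul, h]
      norm_num
    have h1 : Real.cos (ψ/2) ^ 2 + Real.sin (ψ/2) ^ 2 = 1 := by
      rw [add_comm]; exact Real.sin_sq_add_cos_sq _
    rcases lt_or_gt_of_ne hc0 with hneg | hpos
    · obtain ⟨M₁, M₂, M₃, M₄, M₅, hp₁, hp₂, hp₃, hp₄, hp₅, heq⟩ :=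
        key_lemma (-Real.cos (ψ/2)) (-Real.sin (ψ/2)) (by linarith) (by nlinarith)
      refine ⟨M₁, M₂, M₃, M₄, M₅, hp₁, hp₂, hp₃, hp₄, hp₅, ?_⟩
      rw [hiden, ← heq]
      norm_num
    · obtain ⟨M₁, M₂, M₃, M₄, M₅, hp₁, hp₂, hp₃, hp₄, hp₅, heq⟩ :=
        key_lemma (Real.cos (ψ/2)) (Real.sin (ψ/2)) hpos h1
      exact ⟨M₁, M₂, M₃, M₄, M₅, hp₁, hp₂, hp₃, hp₄, hp₅, by rw [hiden, heq]⟩
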